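/- A minimal crucial word with respect to the set S_2^n of abelian squares over an n-letter alphabet (n ≥ 4) cannot contain three distinct letters each of which occurs exactly twice in the word. -/
import Mathlib


/-- A word over `Fin n` is free from abelian squares if no factor is a
concatenation of two nonempty words with the same content vector. -/
def AbSqFree {n : ℕ} (w : List (Fin n)) : Prop :=
  ∀ X Y : List (Fin n), X ≠ [] → Y ≠ [] → (∀ c : Fin n, X.count c = Y.count c) →
    ¬ (X ++ Y) <:+: w

/-- A word is crucial w.r.t. the set of abelian squares if it is free from
abelian squares but appending any letter creates an abelian square factor. -/
def CrucialAb {n : ℕ} (w : List (Fin n)) : Prop :=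
  AbSqFree w ∧
  ∀ a : Fin n, ∃ X Y : List (Fin n), X ≠ [] ∧ Y ≠ [] ∧
    (∀ c : Fin n, X.count c = Y.count c) ∧ (X ++ Y) <:+: (w ++ [a])

/-- Two suffixes of the same list are comparable once we know the lengths. -/
lemma suffix_of_suffix_of_length_le {α : Type*} {l₁ l₂ w : List α}
    (h₁ : l₁ <:+ w) (h₂ : l₂ <:+ w) (h : l₁.length ≤ l₂.length) : l₁ <:+ l₂ := by
  rw [← List.reverse_prefix] at h₁ h₂ ⊢
  exact List.prefix_of_prefix_length_le h₁ h₂ (by simpa using h)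

/-- From cruciality, the abelian square created by appending `p` must be a
suffix, giving a decomposition `w = u ++ X ++ Z` with
`content X = content Z + e_p`. -/
lemma crucial_square_suffix {n : ℕ} {w : List (Fin n)} (hfree : AbSqFree w) (p : Fin n)
    (h : ∃ X Y : List (Fin n), X ≠ [] ∧ Y ≠ [] ∧
      (∀ c : Fin n, X.count c = Y.count c) ∧ (X ++ Y) <:+: (w ++ [p])) :
    ∃ X Z : List (Fin n), (X ++ Z) <:+ w ∧
      ∀ c : Fin n, X.count c = Z.count c + if c = p then 1 else 0 := by
  obtain ⟨X, Y, hX, hY, hc, s, t, hst⟩ := h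
  rcases List.eq_nil_or_concat t with rfl | ⟨t', d, rfl⟩
  · -- the square is a suffix of `w ++ [p]`
    obtain ⟨Z, d', rfl⟩ := (List.eq_nil_or_concat Y).resolve_left hY
    have hst' : (s ++ (X ++ Z)) ++ [d'] = w ++ [p] := by
      simpa [List.concat_eq_append] using hst
    obtain ⟨hw', hd⟩ := List.append_inj' hst' rfl
    have hd' : d' = p := by simpa using hd
    refine ⟨X, Z, ⟨s, hw'⟩, fun c => ?_⟩
    have hcc := hc c
    simp only [List.concat_eq_append, List.count_append] at hcc
    rw [hd'] at hcc
    have hcnt : List.count c [p] = if c = p then 1 else 0 := by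
      by_cases hca : c = p
      · subst hca; simp
      · rw [if_neg hca]; simp [List.count_eq_zero, hca]
    omega
  · -- otherwise the square would be a factor of `w`, contradicting freeness
    exfalso
    have hst' : (s ++ (X ++ Y) ++ t') ++ [d] = w ++ [p] := by
      simpa [List.concat_eq_append] using hst
    obtain ⟨hw', -⟩ := List.append_inj' hst' rfl
    exact hfree X Y hX hY hc ⟨s, t', hw'⟩

/-- The key counting argument. -/
lemma key_counting {n : ℕ} {w : List (Fin n)} {x y z q : Fin n}
    (hxy : x ≠ y) (hzy : z ≠ y)
    (hcx : w.count x = 2) (hcz : w.count z = 2)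
    {Xx Zx Xy Zy Xz Zz Xq Zq : List (Fin n)}
    (hTx : (Xx ++ Zx) <:+ w) (hTy : (Xy ++ Zy) <:+ w) (hTz : (Xz ++ Zz) <:+ w)
    (hx : ∀ c : Fin n, Xx.count c = Zx.count c + if c = x then 1 else 0)
    (hy : ∀ c : Fin n, Xy.count c = Zy.count c + if c = y then 1 else 0)
    (hz : ∀ c : Fin n, Xz.count c = Zz.count c + if c = z then 1 else 0)
    (hq : ∀ c : Fin n, Xq.count c = Zq.count c + if c = q then 1 else 0)
    (hwq : w = Xq ++ Zq)
    (hlxy : (Xx ++ Zx).length ≤ (Xy ++ Zy).length)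
    (hlyz : (Xy ++ Zy).length ≤ (Xz ++ Zz).length) : False := by
  have hTxy : (Xx ++ Zx) <:+ (Xy ++ Zy) := suffix_of_suffix_of_length_le hTx hTy hlxy
  have hTyz : (Xy ++ Zy) <:+ (Xz ++ Zz) := suffix_of_suffix_of_length_le hTy hTz hlyz
  -- counts of x in Tx
  have hx1 : (Xx ++ Zx).count x = 2 * Zx.count x + 1 := by
    rw [List.count_append, hx x, if_pos rfl]; ring
  have hx2 : (Xx ++ Zx).count x ≤ 2 := hcx ▸ hTx.sublist.count_le x
  have hTxx : (Xx ++ Zx).count x = 1 := by omega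
  -- counts of z in Tz
  have hz1 : (Xz ++ Zz).count z = 2 * Zz.count z + 1 := by
    rw [List.count_append, hz z, if_pos rfl]; ring
  have hz2 : (Xz ++ Zz).count z ≤ 2 := hcz ▸ hTz.sublist.count_le z
  have hTzz : (Xz ++ Zz).count z = 1 := by omega
  -- count of x in Ty is even and at least 1, hence at least 2
  have hyx : (Xy ++ Zy).count x = 2 * Zy.count x := by
    rw [List.count_append, hy x, if_neg hxy]; ring
  have hyx1 : 1 ≤ (Xy ++ Zy).count x := hTxx ▸ hTxy.sublist.count_le x
  have hTyx : 2 ≤ (Xy ++ Zy).count x := by omega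
  -- count of z in Ty is even and at most 1, hence 0
  have hyz' : (Xy ++ Zy).count z = 2 * Zy.count z := by
    rw [List.count_append, hy z, if_neg hzy]; ring
  have hyz1 : (Xy ++ Zy).count z ≤ 1 := hTzz ▸ hTyz.sublist.count_le z
  have hTyzc : (Xy ++ Zy).count z = 0 := by omega
  -- counts of x and z in Zq are exactly 1
  have hwx : w.count x = 2 * Zq.count x + if x = q then 1 else 0 := by
    rw [hwq, List.count_append, hq x]; ring
  have hwz : w.count z = 2 * Zq.count z + if z = q then 1 else 0 := by
    rw [hwq, List.count_append, hq z]; ring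
  have hZqx : Zq.count x = 1 := by
    by_cases h : x = q
    · rw [if_pos h] at hwx; omega
    · rw [if_neg h] at hwx; omega
  have hZqz : Zq.count z = 1 := by
    by_cases h : z = q
    · rw [if_pos h] at hwz; omega
    · rw [if_neg h] at hwz; omega
  -- compare the suffixes Zq and Ty of w
  have hZqw : Zq <:+ w := by rw [hwq]; exact ⟨Xq, rfl⟩
  rcases le_total Zq.length (Xy ++ Zy).length with hle | hle
  · have : Zq <:+ (Xy ++ Zy) := suffix_of_suffix_of_length_le hZqw hTy hle
    have := hTyzc ▸ this.sublist.count_le z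
    omega
  · have : (Xy ++ Zy) <:+ Zq := suffix_of_suffix_of_length_le hTy hZqw hle
    have := hZqx ▸ this.sublist.count_le x
    omega

/-- A minimal crucial word w.r.t. the set of abelian squares over an `n`-letter
alphabet (`n ≥ 4`) cannot contain three distinct letters, each occurring
exactly twice in the word. -/
theorem minimal_crucial_no_three_double_letters (n : ℕ) (hn : 4 ≤ n)
    (w : List (Fin n)) (hw : CrucialAb w)
    (hmin : ∀ v : List (Fin n), CrucialAb v → w.length ≤ v.length) :
    ¬ ∃ x y z : Fin n, x ≠ y ∧ x ≠ z ∧ y ≠ z ∧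
      w.count x = 2 ∧ w.count y = 2 ∧ w.count z = 2 := by
  rintro ⟨x, y, z, hxy, hxz, hyz, hcx, hcy, hcz⟩
  -- for each letter, choose a square suffix
  have H : ∀ p : Fin n, ∃ X Z : List (Fin n), (X ++ Z) <:+ w ∧
      ∀ c : Fin n, X.count c = Z.count c + if c = p then 1 else 0 :=
    fun p => crucial_square_suffix hw.1 p (hw.2 p)
  choose X Z hSuf hCnt using H
  -- pick the letter with the longest square suffix
  have hne : (Finset.univ : Finset (Fin n)).Nonempty := ⟨x, Finset.mem_univ x⟩
  obtain ⟨q, -, hqmax⟩ := Finset.exists_max_image Finset.univ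
    (fun p => (X p ++ Z p).length) hne
  -- the suffix `X q ++ Z q` of `w` is itself crucial
  have hXne : ∀ p : Fin n, X p ≠ [] := by
    intro p hnil
    have := hCnt p p
    rw [hnil, if_pos rfl] at this
    simp at this
  have hvcr : CrucialAb (X q ++ Z q) := by
    constructor
    · intro A B hA hB hAB hinf
      exact hw.1 A B hA hB hAB (hinf.trans (hSuf q).isInfix)
    · intro a
      refine ⟨X a, Z a ++ [a], hXne a, by simp, fun c => ?_, ?_⟩
      · rw [List.count_append, hCnt a c]
        have hcnt : (List.count c [a]) = if c = a then 1 else 0 := by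
          by_cases hca : c = a
          · subst hca; simp
          · rw [if_neg hca]; simp [List.count_eq_zero, hca]
        omega
      · have hTa : (X a ++ Z a) <:+ (X q ++ Z q) :=
          suffix_of_suffix_of_length_le (hSuf a) (hSuf q)
            (hqmax a (Finset.mem_univ a))
        obtain ⟨u, hu⟩ := hTa
        refine List.IsSuffix.isInfix ⟨u, ?_⟩
        rw [← hu]
        simp [List.append_assoc]
  -- by minimality, `w` equals this suffix
  have hlen : (X q ++ Z q).length = w.length :=
    le_antisymm (hSuf q).length_le (hmin _ hvcr)
  have hwq : w = X q ++ Z q := ((hSuf q).eq_of_length hlen).symm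
  -- order the three doubled letters by the lengths of their square suffixes
  have key : ∀ a b c : Fin n, a ≠ b → c ≠ b → w.count a = 2 → w.count c = 2 →
      (X a ++ Z a).length ≤ (X b ++ Z b).length →
      (X b ++ Z b).length ≤ (X c ++ Z c).length → False := by
    intro a b c hab hcb ha2 hc2 h1 h2
    exact key_counting hab hcb ha2 hc2 (hSuf a) (hSuf b) (hSuf c)
      (hCnt a) (hCnt b) (hCnt c) (hCnt q) hwq h1 h2
  rcases le_total (X x ++ Z x).length (X y ++ Z y).length with h1 | h1 <;>
  rcases le_total (X y ++ Z y).length (X z ++ Z z).length with h2 | h2 <;>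
  rcases le_total (X x ++ Z x).length (X z ++ Z z).length with h3 | h3
  · exact key x y z hxy hyz.symm hcx hcz h1 h2
  · exact key x y z hxy hyz.symm hcx hcz h1 h2
  · exact key x z y hxz hyz hcx hcy h3 h2
  · exact key z x y hxz.symm hxy.symm hcz hcy h3 h1
  · exact key y x z hxy.symm hxz.symm hcy hcz h1 h3
  · exact key y z x hyz hxz hcy hcx h2 h3
  · exact key x y z hxy hyz.symm hcx hcz (h3.trans h2) (h1.trans h3)
  · exact key z y x hyz.symm hxy hcz hcx h2 h1
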